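/- Let H be a complex Hilbert space and T, P, Q ∈ B(H) with P ≥ 0 and Q ≥ 0. If the block operator [[P, T],[T*, Q]] is a positive operator on H ⊕ H, then T T* ≤ ‖Q‖ · P. -/

import Mathlib

open ContinuousLinearMap

/-- If `P, Q ≥ 0` and the block operator `[[P, T], [T*, Q]]` on the Hilbert space direct sum
`H ⊕ H` is positive, then `T T* ≤ ‖Q‖ • P`. -/
theorem block_pos_imp_mul_adjoint_le {H : Type*} [NormedAddCommGroup H]
    [InnerProductSpace ℂ H] [CompleteSpace H]
    (T P Q : H →L[ℂ] H) (hP : 0 ≤ P) (hQ : 0 ≤ Q)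
    (R : WithLp 2 (H × H) →L[ℂ] WithLp 2 (H × H))
    (hR : ∀ x y : H, R ((WithLp.equiv 2 (H × H)).symm (x, y)) =
      (WithLp.equiv 2 (H × H)).symm (P x + T y, adjoint T x + Q y))
    (hRpos : 0 ≤ R) :
    T * adjoint T ≤ ‖Q‖ • P := by
  rw [le_def] at hRpos ⊢
  simp only [sub_zero] at hRpos
  rw [nonneg_iff_isPositive] at hP hQ
  have key : ∀ x : H, ‖adjoint T x‖^2 ≤ ‖Q‖ * Complex.re (inner ℂ (P x) x) := by
    intro x
    set z := adjoint T x with hz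
    have hzz : (inner ℂ z z : ℂ) = (‖z‖^2 : ℂ) := by
      rw [inner_self_eq_norm_sq_to_K]; norm_num
    have hTz : (inner ℂ (T z) x : ℂ) = (‖z‖^2 : ℂ) := by
      rw [← adjoint_inner_right, ← hz, hzz]
    have main : ∀ t : ℝ, 0 ≤ t →
        0 ≤ Complex.re (inner ℂ (P x) x : ℂ) - 2 * t * ‖z‖^2 + t^2 * ‖Q‖ * ‖z‖^2 := by
      intro t ht
      have h1 := hRpos.re_inner_nonneg_left ((WithLp.equiv 2 (H × H)).symm (x, (-(t:ℂ)) • z))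
      rw [hR] at h1
      simp only [WithLp.prod_inner_apply, WithLp.equiv_symm_apply, WithLp.toLp_fst, WithLp.toLp_snd,
        inner_add_left, inner_smul_left, inner_smul_right, map_add, map_mul, map_neg,
        Complex.conj_ofReal, map_smul, ← hz, hTz, hzz, RCLike.re_to_complex,
        ← Complex.ofReal_pow] at h1
      have hQb : Complex.re (inner ℂ (Q z) z : ℂ) ≤ ‖Q‖ * ‖z‖^2 := by
        have h := re_inner_le_norm (𝕜 := ℂ) (Q z) z
        rw [RCLike.re_to_complex] at h
        nlinarith [Q.le_opNorm z, norm_nonneg (Q z), norm_nonneg z]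
      simp only [Complex.add_re, Complex.neg_re, Complex.mul_re, Complex.ofReal_re,
        Complex.ofReal_im, Complex.neg_im, neg_zero, zero_mul, mul_zero, sub_zero] at h1
      nlinarith [h1, hQb, ht, mul_le_mul_of_nonneg_left hQb (mul_nonneg ht ht), sq_nonneg t]
    have ha : 0 ≤ Complex.re (inner ℂ (P x) x : ℂ) := hP.re_inner_nonneg_left x
    rcases eq_or_lt_of_le (norm_nonneg Q) with hQ0 | hQ0
    · rcases eq_or_ne z 0 with hz0 | hz0
      · rw [hz0]; simp; positivity
      · exfalso
        have hzpos : 0 < ‖z‖^2 := pow_pos (norm_pos_iff.mpr hz0) 2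
        have h2 := main ((Complex.re (inner ℂ (P x) x : ℂ) + 1)/(2*‖z‖^2))
          (le_of_lt (div_pos (by linarith) (by positivity)))
        rw [← hQ0] at h2
        have he : (Complex.re (inner ℂ (P x) x : ℂ) + 1)/(2*‖z‖^2) * ‖z‖^2
            = (Complex.re (inner ℂ (P x) x : ℂ) + 1)/2 := by field_simp
        nlinarith
    · have h2 := main (1/‖Q‖) (by positivity)
      have he : (1/‖Q‖)^2 * ‖Q‖ = 1/‖Q‖ := by field_simp
      rw [he] at h2
      have h3 : (1/‖Q‖) * ‖Q‖ = 1 := one_div_mul_cancel (ne_of_gt hQ0)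
      nlinarith [mul_nonneg hQ0.le h2, h3]
  rw [isPositive_iff_complex]
  intro x
  obtain ⟨hre, hnn⟩ := (isPositive_iff_complex P).mp hP x
  have hT : (inner ℂ (T (adjoint T x)) x : ℂ) = ((‖adjoint T x‖^2 : ℝ) : ℂ) := by
    rw [← adjoint_inner_right, @inner_self_eq_norm_sq_to_K ℂ]
    norm_num
  have hsm : (‖Q‖ • P - T * adjoint T) x = (‖Q‖ : ℂ) • P x - T (adjoint T x) := by
    rw [ContinuousLinearMap.sub_apply, ContinuousLinearMap.smul_apply,
      RCLike.real_smul_eq_coe_smul (K := ℂ)]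
    rfl
  have hv : (inner ℂ ((‖Q‖ • P - T * adjoint T) x) x : ℂ)
      = ((‖Q‖ * Complex.re (inner ℂ (P x) x) - ‖adjoint T x‖^2 : ℝ) : ℂ) := by
    rw [hsm, inner_sub_left, inner_smul_left, Complex.conj_ofReal, hT, ← hre]
    push_cast
    simp [Complex.ofReal_re]
  rw [hv]
  constructor
  · simp [RCLike.re_to_complex, Complex.ofReal_re, ← Complex.ofReal_pow]
  · rw [RCLike.re_to_complex, Complex.ofReal_re]
    have := key x
    linarith
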